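/- Let m,n ∈ ℤ with 3 ∣ m+n. Then for every x ∈ ℝ² and every p ∈ ℤ: U_{m,n}(R₁x) = U_{m,n}(x), U_{m,n}(R₂x) = U_{m,n}(x), and U_{m,n}(x + p·(e+ω)) = U_{m,n}(x), where R₁(x,y) = (x,−y), R₂(x,y) = ((−x + √3·y)/2, (√3·x + y)/2), e = (1,0) and ω = (1/2, √3/2). (Equivalently, U_{m,n}(gx + p(e+ω)) = U_{m,n}(x) for every g in the group generated by R₁ and R₂.) -/

import Mathlib

noncomputable section

/-- The frequency vector `k_{m,n}`. -/
def kvec (m n : ℤ) : ℝ × ℝ :=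
  (2 * Real.pi / 3 * m, 2 * Real.pi / 3 * ((2 * (n : ℝ) - m) / Real.sqrt 3))

/-- The exponential `e_{m,n}(x) = exp(i k_{m,n} · x)`. -/
def efun (m n : ℤ) (x : ℝ × ℝ) : ℂ :=
  Complex.exp (Complex.I * ((((kvec m n).1 * x.1 + (kvec m n).2 * x.2 : ℝ)) : ℂ))

/-- The Neumann trigonometric eigenfunction `U_{m,n}`. -/
def Ufun (m n : ℤ) (x : ℝ × ℝ) : ℂ :=
  efun m n x + efun m (m - n) x + efun (-n) (m - n) x + efun (-n) (-m) x
    + efun (n - m) (-m) x + efun (n - m) n x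

/-- Reflection across the `x`-axis. -/
def R₁ (p : ℝ × ℝ) : ℝ × ℝ := (p.1, -p.2)

/-- Reflection across the line spanned by `(1/2, √3/2)`. -/
def R₂ (p : ℝ × ℝ) : ℝ × ℝ :=
  ((-p.1 + Real.sqrt 3 * p.2) / 2, (Real.sqrt 3 * p.1 + p.2) / 2)

/-- The vector `e = (1,0)`. -/
def evec : ℝ × ℝ := (1, 0)

/-- The vector `ω = (1/2, √3/2)`. -/
def ωvec : ℝ × ℝ := (1 / 2, Real.sqrt 3 / 2)

lemma sqrt3_ne : Real.sqrt 3 ≠ 0 := by positivity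

lemma sqrt3_sq : Real.sqrt 3 * Real.sqrt 3 = 3 := Real.mul_self_sqrt (by norm_num)

lemma efun_R₁ (m n : ℤ) (x : ℝ × ℝ) : efun m n (R₁ x) = efun m (m - n) x := by
  have h : (kvec m n).1 * (R₁ x).1 + (kvec m n).2 * (R₁ x).2
      = (kvec m (m - n)).1 * x.1 + (kvec m (m - n)).2 * x.2 := by
    simp only [kvec, R₁]
    push_cast
    field_simp
    ring
  unfold efun
  rw [h]

lemma efun_R₂ (m n : ℤ) (x : ℝ × ℝ) : efun m n (R₂ x) = efun (n - m) n x := by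
  have h : (kvec m n).1 * (R₂ x).1 + (kvec m n).2 * (R₂ x).2
      = (kvec (n - m) n).1 * x.1 + (kvec (n - m) n).2 * x.2 := by
    simp only [kvec, R₂]
    push_cast
    field_simp
    linear_combination ((m:ℝ) * x.2) * sqrt3_sq
  unfold efun
  rw [h]

lemma efun_trans (m n : ℤ) (hmn : (3 : ℤ) ∣ m + n) (x : ℝ × ℝ) (p : ℤ) :
    efun m n (x + (p : ℝ) • (evec + ωvec)) = efun m n x := by
  obtain ⟨d, hd⟩ := hmn
  have h : (kvec m n).1 * (x + (p : ℝ) • (evec + ωvec)).1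
        + (kvec m n).2 * (x + (p : ℝ) • (evec + ωvec)).2
      = ((kvec m n).1 * x.1 + (kvec m n).2 * x.2) + (p * d : ℤ) * (2 * Real.pi) := by
    have hd' : (m : ℝ) + n = 3 * d := by exact_mod_cast hd
    simp only [kvec, evec, ωvec, Prod.fst_add, Prod.snd_add, Prod.smul_fst, Prod.smul_snd,
      smul_eq_mul, Prod.mk_add_mk]
    push_cast
    field_simp
    linear_combination (2 * (p:ℝ) * Real.sqrt 3) * hd'
  unfold efun
  rw [h]
  push_cast
  rw [mul_add, Complex.exp_add]
  have : Complex.I * (((p : ℂ) * d) * (2 * Real.pi)) = (p * d : ℤ) * (2 * Real.pi * Complex.I) := by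
    push_cast; ring
  rw [this, Complex.exp_int_mul_two_pi_mul_I, mul_one]

theorem Ufun_invariance (m n : ℤ) (hmn : (3 : ℤ) ∣ m + n) (x : ℝ × ℝ) (p : ℤ) :
    Ufun m n (R₁ x) = Ufun m n x ∧ Ufun m n (R₂ x) = Ufun m n x ∧
      Ufun m n (x + (p : ℝ) • (evec + ωvec)) = Ufun m n x := by
  refine ⟨?_, ?_, ?_⟩
  · unfold Ufun
    rw [efun_R₁ m n, efun_R₁ m (m - n), efun_R₁ (-n) (m - n), efun_R₁ (-n) (-m),
      efun_R₁ (n - m) (-m), efun_R₁ (n - m) n]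
    ring_nf
  · unfold Ufun
    rw [efun_R₂ m n, efun_R₂ m (m - n), efun_R₂ (-n) (m - n), efun_R₂ (-n) (-m),
      efun_R₂ (n - m) (-m), efun_R₂ (n - m) n]
    ring_nf
  · have h1 : (3 : ℤ) ∣ m + (m - n) := by omega
    have h2 : (3 : ℤ) ∣ -n + (m - n) := by omega
    have h3 : (3 : ℤ) ∣ -n + -m := by omega
    have h4 : (3 : ℤ) ∣ (n - m) + -m := by omega
    have h5 : (3 : ℤ) ∣ (n - m) + n := by omega
    unfold Ufun
    rw [efun_trans m n hmn, efun_trans m (m - n) h1, efun_trans (-n) (m - n) h2,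
      efun_trans (-n) (-m) h3, efun_trans (n - m) (-m) h4, efun_trans (n - m) n h5]

end
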